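/- Consequence of the recursion structure: the matrices X⁽¹⁾ defined by the truncated recursion with N sidebands are independent of N for all N ≥ 2. Precisely, if Xₙ⁽¹⁾ denotes the matrix obtained from the recursion X⁽ᵏ⁾ = (cₖI − A_d − A₊X⁽ᵏ⁺¹⁾A₋)⁻¹ with boundary X⁽ᴺ⁾ = (c_N I − A_d)⁻¹, and the sequence cₖ is fixed, then the first diagonal 2×2 block of every Xₙ⁽ᵏ⁾ equals (cₖ I₂ − A_d1)⁻¹ independently of N, and hence Ξ⁽¹⁾ = A₊X⁽¹⁾A₋ computed with N sidebands equals that computed with 2 sidebands, for every N ≥ 2. -/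
import Mathlib


open Matrix

/-- A 6×6 matrix built from a 3×3 array of 2×2 blocks. -/
def mk3 (f : Fin 3 → Fin 3 → Matrix (Fin 2) (Fin 2) ℂ) :
    Matrix (Fin 3 × Fin 2) (Fin 3 × Fin 2) ℂ :=
  fun p q => f p.1 q.1 p.2 q.2

/-- The (i,j) 2×2 block of a 6×6 matrix. -/
def blk (i j : Fin 3) (M : Matrix (Fin 3 × Fin 2) (Fin 3 × Fin 2) ℂ) :
    Matrix (Fin 2) (Fin 2) ℂ :=
  fun a b => M (i, a) (j, b)

/-- Block diagonal 6×6 matrix with 2×2 blocks. -/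
def bd3 (D₁ D₂ D₃ : Matrix (Fin 2) (Fin 2) ℂ) :
    Matrix (Fin 3 × Fin 2) (Fin 3 × Fin 2) ℂ :=
  mk3 (fun i j => if i = j then (if i = 0 then D₁ else if i = 1 then D₂ else D₃) else 0)

/-- A₊ = [[0,0,0],[0,0,Q_cm],[Q_ma,0,0]] in 2×2 blocks. -/
def Aplus (Qcm Qma : Matrix (Fin 2) (Fin 2) ℂ) :
    Matrix (Fin 3 × Fin 2) (Fin 3 × Fin 2) ℂ :=
  mk3 (fun i j => if i = 1 ∧ j = 2 then Qcm else if i = 2 ∧ j = 0 then Qma else 0)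

/-- A₋ = [[0,0,Q_am],[0,0,0],[0,Q_mc,0]] in 2×2 blocks. -/
def Aminus (Qam Qmc : Matrix (Fin 2) (Fin 2) ℂ) :
    Matrix (Fin 3 × Fin 2) (Fin 3 × Fin 2) ℂ :=
  mk3 (fun i j => if i = 0 ∧ j = 2 then Qam else if i = 2 ∧ j = 1 then Qmc else 0)

/-- Block diagonality (2×2 blocks) of a 6×6 matrix. -/
def IsBD (M : Matrix (Fin 3 × Fin 2) (Fin 3 × Fin 2) ℂ) : Prop :=
  ∀ p q : Fin 3 × Fin 2, p.1 ≠ q.1 → M p q = 0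

section Aux

abbrev M66 := Matrix (Fin 3 × Fin 2) (Fin 3 × Fin 2) ℂ
abbrev M22 := Matrix (Fin 2) (Fin 2) ℂ

lemma blk_mk3 (i j : Fin 3) (f : Fin 3 → Fin 3 → M22) : blk i j (mk3 f) = f i j := rfl

lemma blk_ext {M N : M66} (h : ∀ i j, blk i j M = blk i j N) : M = N := by
  funext p q
  have := congrFun (congrFun (h p.1 q.1) p.2) q.2
  simpa [blk] using this

lemma blk_one (i j : Fin 3) : blk i j (1 : Matrix (Fin 3 × Fin 2) (Fin 3 × Fin 2) ℂ) = if i = j then 1 else 0 := by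
  funext a b
  by_cases h : i = j <;> by_cases h2 : a = b <;>
    simp [blk, Matrix.one_apply, Prod.ext_iff, h, h2]

lemma blk_mul (i j : Fin 3) (M N : M66) :
    blk i j (M * N) = ∑ k : Fin 3, blk i k M * blk k j N := by
  funext a b
  simp [blk, Matrix.mul_apply, Fintype.sum_prod_type, Matrix.sum_apply]

lemma blk_bd3 (i j : Fin 3) (D₁ D₂ D₃ : M22) :
    blk i j (bd3 D₁ D₂ D₃) =
      if i = j then (if i = 0 then D₁ else if i = 1 then D₂ else D₃) else 0 := rfl

lemma Xi_eq (Qcm Qma Qam Qmc B₁ B₂ B₃ : M22) :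
    Aplus Qcm Qma * bd3 B₁ B₂ B₃ * Aminus Qam Qmc
      = bd3 0 (Qcm * B₃ * Qmc) (Qma * B₁ * Qam) := by
  apply blk_ext
  intro i j
  fin_cases i <;> fin_cases j <;>
    simp [blk_mul, blk_bd3, blk_mk3, Aplus, Aminus, Fin.sum_univ_three,
      Matrix.mul_assoc]

lemma smul_one_sub (c : ℂ) (A₁ A₂ A₃ : M22) :
    c • (1 : Matrix (Fin 3 × Fin 2) (Fin 3 × Fin 2) ℂ) - bd3 A₁ A₂ A₃
      = bd3 (c • 1 - A₁) (c • 1 - A₂) (c • 1 - A₃) := by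
  apply blk_ext
  intro i j
  have : blk i j (c • (1 : Matrix (Fin 3 × Fin 2) (Fin 3 × Fin 2) ℂ) - bd3 A₁ A₂ A₃)
      = c • blk i j (1 : Matrix (Fin 3 × Fin 2) (Fin 3 × Fin 2) ℂ) - blk i j (bd3 A₁ A₂ A₃) := rfl
  rw [this, blk_one, blk_bd3, blk_bd3]
  fin_cases i <;> fin_cases j <;> simp

lemma bd3_sub (A₁ A₂ A₃ B₁ B₂ B₃ : M22) :
    bd3 A₁ A₂ A₃ - bd3 B₁ B₂ B₃ = bd3 (A₁ - B₁) (A₂ - B₂) (A₃ - B₃) := by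
  apply blk_ext
  intro i j
  have : blk i j (bd3 A₁ A₂ A₃ - bd3 B₁ B₂ B₃)
      = blk i j (bd3 A₁ A₂ A₃) - blk i j (bd3 B₁ B₂ B₃) := rfl
  rw [this, blk_bd3, blk_bd3, blk_bd3]
  fin_cases i <;> fin_cases j <;> simp

/-- The inverse of an invertible block-diagonal matrix is block diagonal,
with blocks the (2×2) inverses. -/
lemma bd3_inv {D₁ D₂ D₃ : M22} (h : IsUnit (bd3 D₁ D₂ D₃)) :
    (bd3 D₁ D₂ D₃)⁻¹ = bd3 D₁⁻¹ D₂⁻¹ D₃⁻¹ := by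
  have hdet : IsUnit (bd3 D₁ D₂ D₃).det := (Matrix.isUnit_iff_isUnit_det _).mp h
  have hR : bd3 D₁ D₂ D₃ * (bd3 D₁ D₂ D₃)⁻¹ = 1 := Matrix.mul_nonsing_inv _ hdet
  have hL : (bd3 D₁ D₂ D₃)⁻¹ * bd3 D₁ D₂ D₃ = 1 := Matrix.nonsing_inv_mul _ hdet
  set Nn := (bd3 D₁ D₂ D₃)⁻¹ with hNn
  -- blocks of the right/left inverse equations
  have hRb : ∀ i j : Fin 3,
      (if i = 0 then D₁ else if i = 1 then D₂ else D₃) * blk i j Nn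
        = (if i = j then 1 else 0) := by
    intro i j
    have := congrArg (blk i j) hR
    rw [blk_mul, blk_one] at this
    fin_cases i <;> simpa [blk_bd3, Fin.sum_univ_three] using this
  have hLb : ∀ i j : Fin 3,
      blk i j Nn * (if j = 0 then D₁ else if j = 1 then D₂ else D₃)
        = (if i = j then 1 else 0) := by
    intro i j
    have := congrArg (blk i j) hL
    rw [blk_mul, blk_one] at this
    fin_cases j <;> simpa [blk_bd3, Fin.sum_univ_three] using this
  have hinv : ∀ i : Fin 3,
      (if i = 0 then D₁ else if i = 1 then D₂ else D₃)⁻¹ = blk i i Nn := by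
    intro i
    apply Matrix.inv_eq_right_inv
    simpa using hRb i i
  have hoff : ∀ i j : Fin 3, i ≠ j → blk i j Nn = 0 := by
    intro i j hij
    have h1 : (if i = 0 then D₁ else if i = 1 then D₂ else D₃) * blk i j Nn = 0 := by
      simpa [hij] using hRb i j
    have h2 : blk i i Nn * (if i = 0 then D₁ else if i = 1 then D₂ else D₃) = 1 := by
      simpa using hLb i i
    calc blk i j Nn = 1 * blk i j Nn := (one_mul _).symm
      _ = blk i i Nn * ((if i = 0 then D₁ else if i = 1 then D₂ else D₃) * blk i j Nn) := by
          rw [← h2, mul_assoc]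
      _ = 0 := by rw [h1, mul_zero]
  apply blk_ext
  intro i j
  rw [blk_bd3]
  by_cases hij : i = j
  · subst hij
    have := hinv i
    fin_cases i <;> simp_all
  · rw [if_neg hij, hoff i j hij]

/-- The downward induction: every `X k` is block diagonal with first block
`(c k • 1 - Ad1)⁻¹`, and (below the boundary) explicit third block. -/
lemma key_recursion (N : ℕ) (c : ℕ → ℂ) (Ad1 Ad2 Ad3 Qam Qmc Qcm Qma : M22)
    (X : ℕ → M66)
    (hXN : X N = (c N • (1 : Matrix (Fin 3 × Fin 2) (Fin 3 × Fin 2) ℂ) - bd3 Ad1 Ad2 Ad3)⁻¹)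
    (hXk : ∀ k < N, X k = (c k • (1 : Matrix (Fin 3 × Fin 2) (Fin 3 × Fin 2) ℂ)
        - bd3 Ad1 Ad2 Ad3 - Aplus Qcm Qma * X (k + 1) * Aminus Qam Qmc)⁻¹)
    (hinvXN : IsUnit (c N • (1 : Matrix (Fin 3 × Fin 2) (Fin 3 × Fin 2) ℂ) - bd3 Ad1 Ad2 Ad3))
    (hinvXk : ∀ k < N, IsUnit (c k • (1 : Matrix (Fin 3 × Fin 2) (Fin 3 × Fin 2) ℂ)
        - bd3 Ad1 Ad2 Ad3 - Aplus Qcm Qma * X (k + 1) * Aminus Qam Qmc)) :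
    ∀ m k, k + m = N → ∃ B₂ B₃ : M22,
      X k = bd3 ((c k • 1 - Ad1)⁻¹) B₂ B₃ ∧
      (1 ≤ m → B₃ = (c k • (1 : Matrix (Fin 2) (Fin 2) ℂ) - Ad3
        - Qma * (c (k + 1) • (1 : Matrix (Fin 2) (Fin 2) ℂ) - Ad1)⁻¹ * Qam)⁻¹) := by
  intro m
  induction m with
  | zero =>
    intro k hk
    simp only [Nat.add_zero] at hk
    subst hk
    rw [smul_one_sub] at hXN hinvXN
    exact ⟨_, _, by rw [hXN, bd3_inv hinvXN], by omega⟩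
  | succ m ih =>
    intro k hk
    have hk1 : (k + 1) + m = N := by omega
    have hlt : k < N := by omega
    obtain ⟨B₂, B₃, hX, -⟩ := ih (k + 1) hk1
    have hXi : Aplus Qcm Qma * X (k + 1) * Aminus Qam Qmc
        = bd3 0 (Qcm * B₃ * Qmc) (Qma * (c (k + 1) • 1 - Ad1)⁻¹ * Qam) := by
      rw [hX, Xi_eq]
    have hb : c k • (1 : Matrix (Fin 3 × Fin 2) (Fin 3 × Fin 2) ℂ) - bd3 Ad1 Ad2 Ad3
          - Aplus Qcm Qma * X (k + 1) * Aminus Qam Qmc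
        = bd3 (c k • 1 - Ad1) (c k • 1 - Ad2 - Qcm * B₃ * Qmc)
            (c k • 1 - Ad3 - Qma * (c (k + 1) • 1 - Ad1)⁻¹ * Qam) := by
      rw [hXi, smul_one_sub, bd3_sub, sub_zero]
    have hu := hinvXk k hlt
    rw [hb] at hu
    exact ⟨_, _, by rw [hXk k hlt, hb, bd3_inv hu], fun _ => rfl⟩

end Aux

set_option maxRecDepth 16000 in
set_option maxHeartbeats 2000000 in
/-- Independence of the truncation order: with N ≥ 2 sidebands, the first
diagonal 2×2 block of every X⁽ᵏ⁾ equals (cₖI₂ − A_d1)⁻¹ independently of N,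
and Ξ⁽¹⁾ = A₊X⁽¹⁾A₋ computed with N sidebands equals that computed with 2. -/
theorem recursion_independent_of_N (N : ℕ) (hN : 2 ≤ N) (c : ℕ → ℂ)
    (Ad1 Ad2 Ad3 Qam Qmc Qcm Qma : Matrix (Fin 2) (Fin 2) ℂ)
    (X Y : ℕ → Matrix (Fin 3 × Fin 2) (Fin 3 × Fin 2) ℂ)
    -- recursion with N sidebands
    (hXN : X N = (c N • (1 : Matrix (Fin 3 × Fin 2) (Fin 3 × Fin 2) ℂ)
        - bd3 Ad1 Ad2 Ad3)⁻¹)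
    (hXk : ∀ k < N, X k = (c k • (1 : Matrix (Fin 3 × Fin 2) (Fin 3 × Fin 2) ℂ)
        - bd3 Ad1 Ad2 Ad3 - Aplus Qcm Qma * X (k + 1) * Aminus Qam Qmc)⁻¹)
    (hinvXN : IsUnit (c N • (1 : Matrix (Fin 3 × Fin 2) (Fin 3 × Fin 2) ℂ)
        - bd3 Ad1 Ad2 Ad3))
    (hinvXk : ∀ k < N, IsUnit (c k • (1 : Matrix (Fin 3 × Fin 2) (Fin 3 × Fin 2) ℂ)
        - bd3 Ad1 Ad2 Ad3 - Aplus Qcm Qma * X (k + 1) * Aminus Qam Qmc))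
    -- recursion with 2 sidebands
    (hY2 : Y 2 = (c 2 • (1 : Matrix (Fin 3 × Fin 2) (Fin 3 × Fin 2) ℂ)
        - bd3 Ad1 Ad2 Ad3)⁻¹)
    (hYk : ∀ k < 2, Y k = (c k • (1 : Matrix (Fin 3 × Fin 2) (Fin 3 × Fin 2) ℂ)
        - bd3 Ad1 Ad2 Ad3 - Aplus Qcm Qma * Y (k + 1) * Aminus Qam Qmc)⁻¹)
    (hinvY2 : IsUnit (c 2 • (1 : Matrix (Fin 3 × Fin 2) (Fin 3 × Fin 2) ℂ)
        - bd3 Ad1 Ad2 Ad3))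
    (hinvYk : ∀ k < 2, IsUnit (c k • (1 : Matrix (Fin 3 × Fin 2) (Fin 3 × Fin 2) ℂ)
        - bd3 Ad1 Ad2 Ad3 - Aplus Qcm Qma * Y (k + 1) * Aminus Qam Qmc)) :
    (∀ k, 1 ≤ k → k ≤ N →
        blk 0 0 (X k) = (c k • (1 : Matrix (Fin 2) (Fin 2) ℂ) - Ad1)⁻¹) ∧
    Aplus Qcm Qma * X 1 * Aminus Qam Qmc
      = Aplus Qcm Qma * Y 1 * Aminus Qam Qmc := by
  have keyX := key_recursion N c Ad1 Ad2 Ad3 Qam Qmc Qcm Qma X hXN hXk hinvXN hinvXk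
  have keyY := key_recursion 2 c Ad1 Ad2 Ad3 Qam Qmc Qcm Qma Y hY2 hYk hinvY2 hinvYk
  constructor
  · intro k hk1 hkN
    obtain ⟨B₂, B₃, hX, -⟩ := keyX (N - k) k (by omega)
    rw [hX]
    rfl
  · obtain ⟨B₂, B₃, hX, hB₃⟩ := keyX (N - 1) 1 (by omega)
    obtain ⟨C₂, C₃, hY, hC₃⟩ := keyY 1 1 (by omega)
    rw [hX, hY, Xi_eq, Xi_eq, hB₃ (by omega), hC₃ (by omega)]
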